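/- For every real a with 0 < a < q^{−1} and all n, m ∈ ℕ, the orthogonality relation Σ_{x∈ℕ} p̄_n(q^x; a; q) p̄_m(q^x; a; q) = δ_{nm} holds (the sum over x converging); i.e. it equals 1 if n = m and 0 otherwise. -/

import Mathlib

open scoped BigOperators
open Filter Topology

/-- The finite q-Pochhammer symbol `(a;q)_n`. -/
noncomputable def qPoch (q a : ℝ) (n : ℕ) : ℝ := ∏ k ∈ Finset.range n, (1 - a * q ^ k)

/-- The infinite q-Pochhammer symbol `(a;q)_∞`. -/
noncomputable def qPochInf (q a : ℝ) : ℝ := ∏' k : ℕ, (1 - a * q ^ k)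

/-- Jackson's third q-Bessel function `J_ν(x;q)` for real order `ν`. -/
noncomputable def qBessel (q ν x : ℝ) : ℝ :=
  x ^ (ν / 2) * (qPochInf q (q ^ (ν + 1)) / qPochInf q q) *
    ∑' k : ℕ, (-1 : ℝ) ^ k * q ^ (k * (k - 1) / 2) * (q * x) ^ k /
      (qPoch q q k * qPoch q (q ^ (ν + 1)) k)

/-- Jackson's third q-Bessel function of integer order, extended to negative
integer orders by `J_{-n}(x;q) = (-1)^n q^{n/2} J_n(x q^n; q)`. -/
noncomputable def qBesselZ (q : ℝ) (ν : ℤ) (x : ℝ) : ℝ :=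
  if 0 ≤ ν then qBessel q (ν : ℝ) x
  else (-1 : ℝ) ^ (-ν).toNat * q ^ (((-ν).toNat : ℝ) / 2) *
    qBessel q ((-ν).toNat : ℝ) (x * q ^ (-ν).toNat)

/-- The Wall polynomial `p_n(q^y; a; q)`. -/
noncomputable def wallP (q : ℝ) (n : ℕ) (y a : ℝ) : ℝ :=
  ∑ k ∈ Finset.range (n + 1),
    qPoch q (q ^ (-(n : ℤ))) k * q ^ ((y + 1) * (k : ℝ)) / (qPoch q q k * qPoch q (a * q) k)

/-- The normalized Wall function `p̄_n(q^y; a; q)`. -/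
noncomputable def wallBar (q : ℝ) (n y : ℕ) (a : ℝ) : ℝ :=
  (-1 : ℝ) ^ (n + y) *
    Real.sqrt ((a * q) ^ ((y : ℤ) - (n : ℤ)) * qPochInf q (a * q) * qPoch q (a * q) n /
      (qPoch q q n * qPoch q q y)) *
    wallP q n (y : ℝ) a

lemma qPoch_zero (q a : ℝ) : qPoch q a 0 = 1 := by simp [qPoch]

lemma qPoch_succ (q a : ℝ) (n : ℕ) : qPoch q a (n+1) = qPoch q a n * (1 - a * q ^ n) :=
  Finset.prod_range_succ _ n

lemma qPoch_pos {q a : ℝ} (hq0 : 0 < q) (hq1 : q < 1) (ha0 : 0 ≤ a) (ha1 : a < 1) (n : ℕ) :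
    0 < qPoch q a n := by
  apply Finset.prod_pos
  intro k _
  have h1 : q ^ k ≤ 1 := pow_le_one₀ hq0.le hq1.le
  have h2 : 0 ≤ q ^ k := (pow_pos hq0 k).le
  nlinarith

lemma qPoch_ne_zero {q a : ℝ} (hq0 : 0 < q) (hq1 : q < 1) (ha0 : 0 ≤ a) (ha1 : a < 1) (n : ℕ) :
    qPoch q a n ≠ 0 := (qPoch_pos hq0 hq1 ha0 ha1 n).ne'

/-- triangular numbers -/
def triT : ℕ → ℕ
  | 0 => 0
  | n+1 => triT n + n

lemma triT_eq (n : ℕ) : 2 * triT n + n = n * n := by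
  induction n with
  | zero => simp [triT]
  | succ n ih => simp only [triT]; ring_nf; ring_nf at ih; omega

/-- q-binomial coefficients -/
noncomputable def qb (q : ℝ) : ℕ → ℕ → ℝ
  | 0, 0 => 1
  | 0, _+1 => 0
  | _+1, 0 => 1
  | n+1, j+1 => qb q n (j+1) + q^(n-j) * qb q n j

lemma qb_zero_right (q : ℝ) (n : ℕ) : qb q n 0 = 1 := by cases n <;> rfl

lemma qb_of_lt (q : ℝ) : ∀ n j : ℕ, n < j → qb q n j = 0 := by
  intro n
  induction n with
  | zero => intro j hj; match j, hj with | (j+1), _ => rfl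
  | succ n ih =>
    intro j hj
    match j, hj with
    | (j+1), hj =>
      show qb q n (j+1) + q^(n-j) * qb q n j = 0
      rw [ih (j+1) (by omega), ih j (by omega)]
      ring

lemma qb_mul (q : ℝ) : ∀ n j : ℕ, j ≤ n →
    qb q n j * (qPoch q q j * qPoch q q (n - j)) = qPoch q q n := by
  intro n
  induction n with
  | zero => intro j hj; interval_cases j; simp [qb_zero_right, qPoch_zero]
  | succ n ih =>
    intro j hj
    match j with
    | 0 => simp [qb_zero_right, qPoch_zero]
    | j+1 =>
      show (qb q n (j+1) + q^(n-j) * qb q n j) * _ = _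
      rcases eq_or_lt_of_le hj with h | h
      · -- j = n
        have hjn : j = n := by omega
        subst hjn
        have ihj := ih j le_rfl
        rw [Nat.sub_self, qPoch_zero, mul_one] at ihj
        rw [qb_of_lt q j (j+1) (by omega), Nat.sub_self, Nat.sub_self, pow_zero,
          qPoch_zero, qPoch_succ]
        linear_combination (1 - q*q^j) * ihj
      · -- j + 1 ≤ n
        have hjn : j + 1 ≤ n := by omega
        have ih1 := ih (j+1) hjn
        have ih2 := ih j (by omega)
        have e2 : n + 1 - (j+1) = (n - (j+1)) + 1 := by omega
        have e3 : qPoch q q (n-j) = qPoch q q (n - (j+1)) * (1 - q * q ^ (n - (j+1))) := by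
          rw [show n - j = (n - (j+1)) + 1 by omega, qPoch_succ]
        have key2 : q^(n-j) = q * q ^ (n - (j+1)) := by
          rw [← pow_succ']
          congr 1
          omega
        have key3 : q^(n-(j+1)) * (q * q^j) = q^n := by
          rw [show q * q^j = q^(j+1) from (pow_succ' q j).symm, ← pow_add]
          congr 1
          omega
        rw [e3] at ih2
        rw [qPoch_succ q q j] at ih1
        rw [e2, qPoch_succ q q (n-(j+1)), qPoch_succ q q n, qPoch_succ q q j, key2]
        linear_combination (1 - q*q^(n-(j+1))) * ih1 + (q*q^(n-(j+1))*(1-q*q^j)) * ih2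
          - qPoch q q n * q * key3

lemma gauss_sum (q z : ℝ) : ∀ n : ℕ,
    ∑ j ∈ Finset.range (n+1), qb q n j * (-1)^j * q^(triT j) * z^j
      = ∏ i ∈ Finset.range n, (1 - z * q^i) := by
  intro n
  induction n with
  | zero => simp [qb_zero_right, triT]
  | succ n ih =>
    rw [Finset.sum_range_succ' _ (n+1), Finset.prod_range_succ, ← ih]
    have hsplit : ∀ j ∈ Finset.range (n+1),
        qb q (n+1) (j+1) * (-1)^(j+1) * q^(triT (j+1)) * z^(j+1)
          = (qb q n (j+1) * (-1)^(j+1) * q^(triT (j+1)) * z^(j+1))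
            + (-(z * q^n)) * (qb q n j * (-1)^j * q^(triT j) * z^j) := by
      intro j hj
      show (qb q n (j+1) + q^(n-j) * qb q n j) * _ * _ * _ = _
      have hjn : j ≤ n := Nat.lt_succ_iff.mp (Finset.mem_range.mp hj)
      have hq : q^(n-j) * q^(triT (j+1)) = q^n * q^(triT j) := by
        rw [← pow_add, ← pow_add]
        congr 1
        have : triT (j+1) = triT j + j := rfl
        omega
      rw [pow_succ (-1 : ℝ) j, pow_succ z j]
      linear_combination (-((-1:ℝ)^j * qb q n j * z^j * z)) * hq
    rw [Finset.sum_congr rfl hsplit, Finset.sum_add_distrib, ← Finset.mul_sum]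
    have h0 : qb q (n+1) 0 * (-1)^0 * q^(triT 0) * z^0 = 1 := by
      simp [qb_zero_right, triT]
    rw [h0]
    have hlast : ∑ j ∈ Finset.range (n+1), qb q n (j+1) * (-1)^(j+1) * q^(triT (j+1)) * z^(j+1)
        = (∑ j ∈ Finset.range (n+2), qb q n j * (-1)^j * q^(triT j) * z^j) - 1 := by
      rw [Finset.sum_range_succ' (fun j => qb q n j * (-1)^j * q^(triT j) * z^j) (n+1)]
      simp [qb_zero_right, triT]
    rw [hlast, Finset.sum_range_succ _ (n+1), qb_of_lt q n (n+1) (by omega)]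
    ring

lemma qPoch_qinv (q : ℝ) (hq : q ≠ 0) (n : ℕ) : ∀ j : ℕ, j ≤ n →
    qPoch q (q ^ (-(n:ℤ))) j
      = (-1)^j * q^((triT j : ℤ) - n*j) * ∏ i ∈ Finset.range j, (1 - q^(n-i)) := by
  intro j
  induction j with
  | zero => intro _; simp [qPoch_zero, triT]
  | succ j ihj =>
    intro hj
    have hjn : j ≤ n := by omega
    rw [qPoch_succ, ihj hjn, Finset.prod_range_succ]
    have hz : (q:ℝ)^(-(n:ℤ)) * q^j = q^((j:ℤ) - n) := by
      rw [← zpow_natCast q j, ← zpow_add₀ hq]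
      congr 1
      ring
    have hinv : (q:ℝ)^((j:ℤ)-n) * q^(n-j) = 1 := by
      rw [← zpow_natCast q (n-j), ← zpow_add₀ hq, show (j:ℤ)-n + ((n-j:ℕ):ℤ) = 0 by omega,
        zpow_zero]
    have hfac : 1 - q^(-(n:ℤ)) * q^j = -(q^((j:ℤ)-n)) * (1 - q^(n-j)) := by
      rw [hz]
      linear_combination (-1:ℝ) * hinv
    have hpow : q^((triT (j+1) : ℤ) - (n:ℤ)*((j+1 : ℕ):ℤ)) = q^((triT j : ℤ) - n*j) * q^((j:ℤ)-n) := by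
      rw [← zpow_add₀ hq]
      congr 1
      have ht : triT (j+1) = triT j + j := rfl
      rw [ht]
      push_cast
      ring
    rw [hpow, pow_succ, hfac]
    ring

lemma prod_one_sub_pow (q : ℝ) (n : ℕ) : ∀ j : ℕ, j ≤ n →
    (∏ i ∈ Finset.range j, (1 - q^(n-i))) * qPoch q q (n-j) = qPoch q q n := by
  intro j
  induction j with
  | zero => intro _; simp [qPoch]
  | succ j ihj =>
    intro hj
    have hjn : j ≤ n := by omega
    rw [Finset.prod_range_succ]
    have e1 : qPoch q q (n-j) = qPoch q q (n-(j+1)) * (1 - q * q^(n-(j+1))) := by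
      rw [show n - j = (n-(j+1)) + 1 by omega, qPoch_succ]
    have e2 : q * q^(n-(j+1)) = q^(n-j) := by
      rw [← pow_succ']
      congr 1
      omega
    rw [← ihj hjn, e1, e2]
    ring

lemma mono_sum (q : ℝ) (hq0 : 0 < q) (hq1 : q < 1) (n m : ℕ) :
    ∑ j ∈ Finset.range (n+1), qPoch q (q ^ (-(n:ℤ))) j * q^(j*(m+1)) / qPoch q q j
      = ∏ i ∈ Finset.range n, (1 - q^((1+m+i:ℤ) - n)) := by
  have hqne : q ≠ 0 := hq0.ne'
  have hterm : ∀ j ∈ Finset.range (n+1),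
      qPoch q (q ^ (-(n:ℤ))) j * q^(j*(m+1)) / qPoch q q j
        = qb q n j * (-1)^j * q^(triT j) * (q^((1+m:ℤ)-n))^j := by
    intro j hj
    have hjn : j ≤ n := by
      have := Finset.mem_range.mp hj
      omega
    have h1 := qPoch_qinv q hqne n j hjn
    have h2 := prod_one_sub_pow q n j hjn
    have h3 := qb_mul q n j hjn
    have hne1 : qPoch q q j ≠ 0 := qPoch_ne_zero hq0 hq1 hq0.le hq1 j
    have hne2 : qPoch q q (n-j) ≠ 0 := qPoch_ne_zero hq0 hq1 hq0.le hq1 (n-j)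
    have hz : q^((triT j:ℤ) - n*j) * q^(j*(m+1)) = q^(triT j) * (q^((1+m:ℤ)-n))^j := by
      rw [← zpow_natCast q (j*(m+1)), ← zpow_add₀ hqne, ← zpow_natCast q (triT j),
        ← zpow_natCast (q^((1+m:ℤ)-n)) j, ← zpow_mul, ← zpow_add₀ hqne]
      congr 1
      push_cast
      ring
    rw [div_eq_iff hne1, h1]
    apply mul_right_cancel₀ hne2
    linear_combination ((-1:ℝ)^j * q^((triT j:ℤ) - n*j) * q^(j*(m+1))) * h2
      - ((-1:ℝ)^j * q^(triT j) * (q^((1+m:ℤ)-n))^j) * h3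
      + ((-1:ℝ)^j * qPoch q q n) * hz
  rw [Finset.sum_congr rfl hterm, gauss_sum q (q^((1+m:ℤ)-n)) n]
  apply Finset.prod_congr rfl
  intro i _
  congr 1
  rw [← zpow_natCast q i, ← zpow_add₀ hqne]
  congr 1
  ring

noncomputable def eulS (q t : ℝ) : ℝ := ∑' x : ℕ, t^x / qPoch q q x

lemma eulSummable {q : ℝ} (hq0 : 0 < q) (hq1 : q < 1) {t : ℝ} (ht0 : 0 < t) (ht1 : t < 1) :
    Summable (fun x : ℕ => t^x / qPoch q q x) := by
  apply summable_of_ratio_test_tendsto_lt_one ht1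
  · filter_upwards with n
    have h := qPoch_ne_zero hq0 hq1 hq0.le hq1 n
    positivity
  · have key : ∀ n : ℕ, ‖t^(n+1) / qPoch q q (n+1)‖ / ‖t^n / qPoch q q n‖
        = t * (1 - q*q^n)⁻¹ := by
      intro n
      have hp : 0 < qPoch q q n := qPoch_pos hq0 hq1 hq0.le hq1 n
      have h1q : 0 < 1 - q*q^n := by
        have h2 : q^n ≤ 1 := pow_le_one₀ hq0.le hq1.le
        nlinarith
      have hp1 : 0 < qPoch q q (n+1) := qPoch_pos hq0 hq1 hq0.le hq1 (n+1)
      rw [Real.norm_of_nonneg (by positivity), Real.norm_of_nonneg (by positivity),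
        qPoch_succ]
      field_simp
      ring
    have h0 : Tendsto (fun n : ℕ => q*q^n) atTop (nhds 0) := by
      simpa using (tendsto_pow_atTop_nhds_zero_of_lt_one hq0.le hq1).const_mul q
    have h1 : Tendsto (fun n : ℕ => t * (1 - q*q^n)⁻¹) atTop (nhds t) := by
      have h2 : Tendsto (fun n : ℕ => (1 - q*q^n)⁻¹) atTop (nhds 1) := by
        have hsub : Tendsto (fun n : ℕ => 1 - q*q^n) atTop (nhds (1:ℝ)) := by
          simpa using tendsto_const_nhds.sub h0
        have := hsub.inv₀ (by norm_num)
        simpa using this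
      simpa using tendsto_const_nhds.mul h2
    exact h1.congr (fun n => (key n).symm)

lemma eulS_one_le {q : ℝ} (hq0 : 0 < q) (hq1 : q < 1) {t : ℝ} (ht0 : 0 < t) (ht1 : t < 1) :
    1 ≤ eulS q t := by
  have hs := eulSummable hq0 hq1 ht0 ht1
  have h0 : (fun x : ℕ => t^x / qPoch q q x) 0 = 1 := by simp [qPoch_zero]
  calc (1:ℝ) = (fun x : ℕ => t^x / qPoch q q x) 0 := h0.symm
    _ ≤ eulS q t := by
        apply hs.le_tsum 0
        intro i _
        have hp : 0 < qPoch q q i := qPoch_pos hq0 hq1 hq0.le hq1 i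
        positivity

lemma eulS_tail {q : ℝ} (hq0 : 0 < q) (hq1 : q < 1) {t : ℝ} (ht0 : 0 < t) (ht1 : t < 1) :
    HasSum (fun x : ℕ => t^(x+1)/qPoch q q (x+1)) (eulS q t - 1) := by
  have hs := (eulSummable hq0 hq1 ht0 ht1).hasSum
  rw [hasSum_nat_add_iff (f := fun x : ℕ => t^x / qPoch q q x) 1]
  convert hs using 2
  · rfl
  simp [qPoch_zero, eulS]

lemma eulS_feq {q : ℝ} (hq0 : 0 < q) (hq1 : q < 1) {t : ℝ} (ht0 : 0 < t) (ht1 : t < 1) :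
    (1 - t) * eulS q t = eulS q (q*t) := by
  have hqt0 : 0 < q*t := by positivity
  have hqt1 : q*t < 1 := by nlinarith
  have h1 := eulS_tail hq0 hq1 ht0 ht1
  have h2 := eulS_tail hq0 hq1 hqt0 hqt1
  have h3 : HasSum (fun x : ℕ => t * (t^x / qPoch q q x)) (t * eulS q t) :=
    (eulSummable hq0 hq1 ht0 ht1).hasSum.mul_left t
  have h4 := h2.add h3
  have heq : (fun x : ℕ => t^(x+1)/qPoch q q (x+1))
      = fun x => (q*t)^(x+1)/qPoch q q (x+1) + t*(t^x/qPoch q q x) := by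
    funext x
    have hp : qPoch q q x ≠ 0 := qPoch_ne_zero hq0 hq1 hq0.le hq1 x
    have h1q : (1 - q*q^x) ≠ 0 := by
      have h2 : q^x ≤ 1 := pow_le_one₀ hq0.le hq1.le
      nlinarith
    rw [qPoch_succ]
    field_simp
    ring
  rw [heq] at h1
  have := h1.unique h4
  linarith

lemma eulS_iter {q : ℝ} (hq0 : 0 < q) (hq1 : q < 1) {t : ℝ} (ht0 : 0 < t) (ht1 : t < 1) :
    ∀ N : ℕ, eulS q t * qPoch q t N = eulS q (q^N * t) := by
  intro N
  induction N with
  | zero => simp [qPoch_zero]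
  | succ N ih =>
    have ht0' : 0 < q^N * t := by positivity
    have ht1' : q^N * t < 1 := by
      have h2 : q^N ≤ 1 := pow_le_one₀ hq0.le hq1.le
      nlinarith
    have h := eulS_feq hq0 hq1 ht0' ht1'
    rw [show q^(N+1)*t = q*(q^N*t) by ring, ← h, ← ih, qPoch_succ]
    ring

lemma tendsto_eulS_pow {q : ℝ} (hq0 : 0 < q) (hq1 : q < 1) {t : ℝ} (ht0 : 0 < t) (ht1 : t < 1) :
    Tendsto (fun N : ℕ => eulS q (q^N * t)) atTop (nhds 1) := by
  have hlt : ∀ N : ℕ, 0 < q^N*t ∧ q^N*t < 1 := by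
    intro N
    constructor
    · positivity
    · have h2 : q^N ≤ 1 := pow_le_one₀ hq0.le hq1.le
      nlinarith
  have hub : ∀ N : ℕ, eulS q (q^N*t) ≤ 1 + q^N * (eulS q t - 1) := by
    intro N
    have h1 := eulS_tail hq0 hq1 (hlt N).1 (hlt N).2
    have h2 := eulS_tail hq0 hq1 ht0 ht1
    have hle : eulS q (q^N*t) - 1 ≤ q^N * (eulS q t - 1) := by
      have := hasSum_le (f := fun x : ℕ => (q^N*t)^(x+1)/qPoch q q (x+1))
        (g := fun x : ℕ => q^N * (t^(x+1)/qPoch q q (x+1))) ?_ h1 (h2.mul_left (q^N))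
      · linarith [this]
      · intro x
        have hp : 0 < qPoch q q (x+1) := qPoch_pos hq0 hq1 hq0.le hq1 (x+1)
        show (q^N*t)^(x+1)/qPoch q q (x+1) ≤ q^N * (t^(x+1)/qPoch q q (x+1))
        rw [mul_pow, mul_div_assoc]
        apply mul_le_mul_of_nonneg_right _ (by positivity)
        calc (q^N)^(x+1) ≤ (q^N)^1 := by
              apply pow_le_pow_of_le_one (by positivity) (pow_le_one₀ hq0.le hq1.le)
              omega
          _ = q^N := pow_one _
    linarith
  have hlb : ∀ N : ℕ, 1 ≤ eulS q (q^N*t) := fun N => eulS_one_le hq0 hq1 (hlt N).1 (hlt N).2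
  have hup : Tendsto (fun N : ℕ => 1 + q^N * (eulS q t - 1)) atTop (nhds 1) := by
    have h0 : Tendsto (fun N : ℕ => q^N * (eulS q t - 1)) atTop (nhds 0) := by
      simpa using (tendsto_pow_atTop_nhds_zero_of_lt_one hq0.le hq1).mul_const (eulS q t - 1)
    simpa using tendsto_const_nhds.add h0
  exact tendsto_of_tendsto_of_tendsto_of_le_of_le tendsto_const_nhds hup hlb hub

lemma hasProd_qpoch {q : ℝ} (hq0 : 0 < q) (hq1 : q < 1) {t : ℝ} (ht0 : 0 ≤ t) (ht1 : t < 1) :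
    HasProd (fun k : ℕ => 1 - t*q^k)
      (⨅ s : Finset ℕ, ∏ k ∈ s, (1 - t*q^k)) := by
  have hfac : ∀ k : ℕ, 0 < 1 - t*q^k ∧ 1 - t*q^k ≤ 1 := by
    intro k
    have h1 : q^k ≤ 1 := pow_le_one₀ hq0.le hq1.le
    have h2 : 0 < q^k := pow_pos hq0 k
    constructor <;> nlinarith
  have hant : Antitone (fun s : Finset ℕ => ∏ k ∈ s, (1 - t*q^k)) := by
    intro s u hsu
    have hsd := Finset.prod_sdiff hsu (f := fun k => 1 - t*q^k)
    have h1 : ∏ k ∈ u \ s, (1 - t*q^k) ≤ 1 :=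
      Finset.prod_le_one (fun k _ => (hfac k).1.le) (fun k _ => (hfac k).2)
    have h2 : (0:ℝ) ≤ ∏ k ∈ s, (1 - t*q^k) :=
      Finset.prod_nonneg (fun k _ => (hfac k).1.le)
    calc ∏ k ∈ u, (1 - t*q^k) = (∏ k ∈ u \ s, (1 - t*q^k)) * ∏ k ∈ s, (1 - t*q^k) := hsd.symm
      _ ≤ 1 * ∏ k ∈ s, (1 - t*q^k) := mul_le_mul_of_nonneg_right h1 h2
      _ = _ := one_mul _
  have hbdd : BddBelow (Set.range (fun s : Finset ℕ => ∏ k ∈ s, (1 - t*q^k))) := by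
    refine ⟨0, ?_⟩
    rintro x ⟨s, rfl⟩
    exact Finset.prod_nonneg (fun k _ => (hfac k).1.le)
  exact tendsto_atTop_ciInf hant hbdd

lemma qPochInf_mul_eulS {q : ℝ} (hq0 : 0 < q) (hq1 : q < 1) {t : ℝ} (ht0 : 0 < t) (ht1 : t < 1) :
    qPochInf q t * eulS q t = 1 := by
  have hp := hasProd_qpoch hq0 hq1 ht0.le ht1
  have h1 : Tendsto (fun N : ℕ => ∏ k ∈ Finset.range N, (1 - t*q^k)) atTop
      (nhds (qPochInf q t)) := by
    rw [qPochInf, hp.tprod_eq]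
    exact hp.tendsto_prod_nat
  have h2 : Tendsto (fun N : ℕ => eulS q t * qPoch q t N) atTop
      (nhds (eulS q t * qPochInf q t)) := by
    exact h1.const_mul _
  have h3 := (h2.congr (fun N => eulS_iter hq0 hq1 ht0 ht1 N))
  have h4 := tendsto_eulS_pow hq0 hq1 ht0 ht1
  have := tendsto_nhds_unique h3 h4
  linarith [this]

lemma eulS_pos {q : ℝ} (hq0 : 0 < q) (hq1 : q < 1) {t : ℝ} (ht0 : 0 < t) (ht1 : t < 1) :
    0 < eulS q t := lt_of_lt_of_le one_pos (eulS_one_le hq0 hq1 ht0 ht1)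

lemma qPochInf_pos {q : ℝ} (hq0 : 0 < q) (hq1 : q < 1) {t : ℝ} (ht0 : 0 < t) (ht1 : t < 1) :
    0 < qPochInf q t := by
  have h := qPochInf_mul_eulS hq0 hq1 ht0 ht1
  have hS := eulS_pos hq0 hq1 ht0 ht1
  nlinarith

lemma qPoch_add (q c : ℝ) (j k : ℕ) :
    qPoch q c (j+k) = qPoch q c j * ∏ i ∈ Finset.range k, (1 - c*q^(j+i)) := by
  unfold qPoch
  rw [Finset.prod_range_add]

lemma prod_neg_apow (q a : ℝ) : ∀ n : ℕ,
    ∏ i ∈ Finset.range n, (-(a*q^(1+i))) = (-1)^n * a^n * q^(n + triT n) := by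
  intro n
  induction n with
  | zero => simp [triT]
  | succ n ih =>
    rw [Finset.prod_range_succ, ih]
    have ht : triT (n+1) = triT n + n := rfl
    rw [ht, pow_succ (-1:ℝ), pow_succ a, show n+1 + (triT n + n) = (n + triT n) + (1+n) by ring,
      pow_add q]
    ring

/-- inner sum -/
noncomputable def wallJ (q a : ℝ) (n k : ℕ) : ℝ :=
  ∑ j ∈ Finset.range (n+1),
    qPoch q (q^(-(n:ℤ))) j / qPoch q q j * q^j * ∏ i ∈ Finset.range k, (1 - a*q*q^(j+i))

lemma wallJ_eq {q : ℝ} (hq0 : 0 < q) (hq1 : q < 1) (a : ℝ) (n k : ℕ) :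
    wallJ q a n k = ∑ t ∈ (Finset.range k).powerset,
      (∏ i ∈ t, -(a*q^(1+i))) * ∏ i ∈ Finset.range n, (1 - q^((1+(t.card : ℤ)+i)-n)) := by
  unfold wallJ
  have hexp : ∀ j : ℕ, (∏ i ∈ Finset.range k, (1 - a*q*q^(j+i)))
      = ∑ t ∈ (Finset.range k).powerset, (∏ i ∈ t, -(a*q^(1+i))) * (q^j)^t.card := by
    intro j
    have hfac : ∀ i ∈ Finset.range k, (1 : ℝ) - a*q*q^(j+i) = -(a*q^(1+i)) * q^j + 1 := by
      intro i _
      rw [pow_add, pow_add]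
      ring
    rw [Finset.prod_congr rfl hfac, Finset.prod_add]
    apply Finset.sum_congr rfl
    intro t ht
    rw [Finset.prod_const_one, mul_one, Finset.prod_mul_distrib, Finset.prod_const]
  have h1 : ∀ j ∈ Finset.range (n+1),
      qPoch q (q^(-(n:ℤ))) j / qPoch q q j * q^j * ∏ i ∈ Finset.range k, (1 - a*q*q^(j+i))
        = ∑ t ∈ (Finset.range k).powerset,
            (∏ i ∈ t, -(a*q^(1+i))) * (qPoch q (q^(-(n:ℤ))) j * q^(j*(t.card+1)) / qPoch q q j) := by
    intro j _
    rw [hexp j, Finset.mul_sum]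
    apply Finset.sum_congr rfl
    intro t _
    have hp : q^j * (q^j)^t.card = q^(j*(t.card+1)) := by
      rw [← pow_mul, ← pow_add]
      congr 1
      ring
    field_simp
    ring
  rw [Finset.sum_congr rfl h1, Finset.sum_comm]
  apply Finset.sum_congr rfl
  intro t _
  rw [← Finset.mul_sum]
  congr 1
  have := mono_sum q hq0 hq1 n t.card
  rw [← this]

lemma wallJ_eq_zero {q : ℝ} (hq0 : 0 < q) (hq1 : q < 1) (a : ℝ) {n k : ℕ} (hkn : k < n) :
    wallJ q a n k = 0 := by
  rw [wallJ_eq hq0 hq1]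
  apply Finset.sum_eq_zero
  intro t ht
  have hcard : t.card < n := by
    have h1 : t.card ≤ k := by
      have := Finset.card_le_card (Finset.mem_powerset.mp ht)
      simpa using this
    omega
  have hzero : (1 : ℝ) - q^((1+(t.card : ℤ)+(n-1-t.card : ℕ))-n) = 0 := by
    rw [show (1+(t.card : ℤ)+((n-1-t.card : ℕ) : ℤ))-(n:ℤ) = 0 by omega, zpow_zero]
    ring
  rw [Finset.prod_eq_zero (Finset.mem_range.mpr (show n-1-t.card < n by omega)) hzero]
  ring

lemma wallJ_self {q : ℝ} (hq0 : 0 < q) (hq1 : q < 1) (a : ℝ) (n : ℕ) :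
    wallJ q a n n = (-1)^n * a^n * q^(n + triT n) * qPoch q q n := by
  rw [wallJ_eq hq0 hq1]
  rw [Finset.sum_eq_single (Finset.range n)]
  · rw [prod_neg_apow, Finset.card_range]
    congr 1
    unfold qPoch
    apply Finset.prod_congr rfl
    intro i _
    congr 1
    rw [show (1+(n : ℤ)+(i:ℤ))-(n:ℤ) = ((1+i : ℕ) : ℤ) by omega, zpow_natCast, pow_add]
    ring
  · intro t ht htne
    have hsub := Finset.mem_powerset.mp ht
    have hcard : t.card < n := by
      have h1 : t.card ≤ n := by simpa using Finset.card_le_card hsub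
      rcases lt_or_eq_of_le h1 with h | h
      · exact h
      · exfalso
        exact htne (Finset.eq_of_subset_of_card_le hsub (by simp [h]))
    have hzero : (1 : ℝ) - q^((1+(t.card : ℤ)+(n-1-t.card : ℕ))-n) = 0 := by
      rw [show (1+(t.card : ℤ)+((n-1-t.card : ℕ) : ℤ))-(n:ℤ) = 0 by omega, zpow_zero]
      ring
    rw [Finset.prod_eq_zero (Finset.mem_range.mpr (show n-1-t.card < n by omega)) hzero]
    ring
  · intro h
    exact absurd (Finset.mem_powerset.mpr le_rfl) h

lemma wallP_nat (q a : ℝ) (n x : ℕ) : wallP q n (x:ℝ) a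
    = ∑ j ∈ Finset.range (n+1),
        qPoch q (q^(-(n:ℤ))) j * q^((x+1)*j) / (qPoch q q j * qPoch q (a*q) j) := by
  unfold wallP
  apply Finset.sum_congr rfl
  intro j _
  congr 2
  rw [show ((x:ℝ)+1)*(j:ℝ) = (((x+1)*j : ℕ) : ℝ) by push_cast; ring, Real.rpow_natCast]

noncomputable def wallC (q a : ℝ) (n j : ℕ) : ℝ :=
  qPoch q (q^(-(n:ℤ))) j / (qPoch q q j * qPoch q (a*q) j)

section Core

variable {q a : ℝ} (hq0 : 0 < q) (hq1 : q < 1) (ha0 : 0 < a) (ha1 : a < q⁻¹)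

include hq0 ha1 in
lemma haq1 : a*q < 1 := by
  have := mul_lt_mul_of_pos_right ha1 hq0
  rwa [inv_mul_cancel₀ hq0.ne'] at this

include hq0 hq1 ha0 ha1 in
lemma core_hasSum (n m : ℕ) :
    HasSum (fun x : ℕ => (a*q)^x / qPoch q q x * wallP q n (x:ℝ) a * wallP q m (x:ℝ) a)
      (∑ k ∈ Finset.range (m+1), ∑ j ∈ Finset.range (n+1),
        wallC q a m k * wallC q a n j * q^(j+k) * eulS q (a*q^(1+j+k))) := by
  have haq0 : 0 < a*q := by positivity
  have haq1' : a*q < 1 := haq1 hq0 ha1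
  have hpt : ∀ x : ℕ, (a*q)^x / qPoch q q x * wallP q n (x:ℝ) a * wallP q m (x:ℝ) a
      = ∑ k ∈ Finset.range (m+1), ∑ j ∈ Finset.range (n+1),
          wallC q a m k * wallC q a n j * q^(j+k) * ((a*q^(1+j+k))^x / qPoch q q x) := by
    intro x
    rw [wallP_nat, wallP_nat, Finset.mul_sum]
    apply Finset.sum_congr rfl
    intro k _
    rw [Finset.mul_sum, Finset.sum_mul]
    apply Finset.sum_congr rfl
    intro j _
    unfold wallC
    have hx : (a*q)^x * (q^((x+1)*j) * q^((x+1)*k)) = q^(j+k) * (a*q^(1+j+k))^x := by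
      calc (a*q)^x * (q^((x+1)*j) * q^((x+1)*k))
          = a^x * q^(x + ((x+1)*j + (x+1)*k)) := by rw [mul_pow, pow_add, pow_add]; ring
        _ = q^(j+k) * (a*q^(1+j+k))^x := by
            rw [mul_pow, ← pow_mul,
              show x + ((x+1)*j + (x+1)*k) = (j+k) + (1+j+k)*x by ring, pow_add]
            ring
    have h1 : qPoch q q j ≠ 0 := qPoch_ne_zero hq0 hq1 hq0.le hq1 j
    have h2 : qPoch q q k ≠ 0 := qPoch_ne_zero hq0 hq1 hq0.le hq1 k
    have h3 : qPoch q (a*q) j ≠ 0 := qPoch_ne_zero hq0 hq1 haq0.le haq1' j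
    have h4 : qPoch q (a*q) k ≠ 0 := qPoch_ne_zero hq0 hq1 haq0.le haq1' k
    have h5 : qPoch q q x ≠ 0 := qPoch_ne_zero hq0 hq1 hq0.le hq1 x
    field_simp
    linear_combination (qPoch q (q ^ (-(n:ℤ))) j * qPoch q (q ^ (-(m:ℤ))) k) * hx
  rw [funext hpt]
  apply hasSum_sum
  intro k _
  apply hasSum_sum
  intro j _
  have ht0 : 0 < a*q^(1+j+k) := by positivity
  have ht1 : a*q^(1+j+k) < 1 := by
    have h2 : q^(1+j+k) ≤ q := by
      calc q^(1+j+k) ≤ q^1 := pow_le_pow_of_le_one hq0.le hq1.le (by omega)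
        _ = q := pow_one q
    nlinarith
  exact ((eulSummable hq0 hq1 ht0 ht1).hasSum.mul_left _)

include hq0 hq1 ha0 ha1 in
lemma core_value {n m : ℕ} (hmn : m ≤ n) :
    (∑ k ∈ Finset.range (m+1), ∑ j ∈ Finset.range (n+1),
        wallC q a m k * wallC q a n j * q^(j+k) * eulS q (a*q^(1+j+k)))
      = if n = m then eulS q (a*q) * ((a*q)^n * qPoch q q n / qPoch q (a*q) n) else 0 := by
  have haq0 : 0 < a*q := by positivity
  have haq1' : a*q < 1 := haq1 hq0 ha1
  have hstep : ∀ k ∈ Finset.range (m+1),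
      (∑ j ∈ Finset.range (n+1), wallC q a m k * wallC q a n j * q^(j+k) * eulS q (a*q^(1+j+k)))
        = wallC q a m k * q^k * eulS q (a*q) * wallJ q a n k := by
    intro k _
    rw [wallJ, Finset.mul_sum]
    apply Finset.sum_congr rfl
    intro j _
    have hqq : q^(j+k) * (a*q) = a*q^(1+j+k) := by
      rw [show (1:ℕ)+j+k = 1+(j+k) from by ring, pow_add q 1 (j+k), pow_one]
      ring
    have heul : eulS q (a*q^(1+j+k)) = eulS q (a*q) * qPoch q (a*q) (j+k) := by
      rw [← hqq, ← eulS_iter hq0 hq1 haq0 haq1' (j+k)]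
    rw [heul, qPoch_add q (a*q) j k]
    unfold wallC
    have h1 : qPoch q q j ≠ 0 := qPoch_ne_zero hq0 hq1 hq0.le hq1 j
    have h2 : qPoch q q k ≠ 0 := qPoch_ne_zero hq0 hq1 hq0.le hq1 k
    have h3 : qPoch q (a*q) j ≠ 0 := qPoch_ne_zero hq0 hq1 haq0.le haq1' j
    have h4 : qPoch q (a*q) k ≠ 0 := qPoch_ne_zero hq0 hq1 haq0.le haq1' k
    field_simp
    ring
  rw [Finset.sum_congr rfl hstep]
  by_cases hnm : n = m
  · subst hnm
    rw [if_pos rfl]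
    rw [Finset.sum_eq_single_of_mem n (Finset.self_mem_range_succ n)]
    · rw [wallJ_self hq0 hq1]
      unfold wallC
      have hpn := qPoch_qinv q hq0.ne' n n le_rfl
      have hπ : (∏ i ∈ Finset.range n, (1 - q^(n-i))) = qPoch q q n := by
        have := prod_one_sub_pow q n n le_rfl
        simpa [qPoch_zero] using this
      rw [hpn, hπ]
      have hq2 : q^((triT n : ℤ) - n*n) * (q^n * q^(n + triT n)) = q^n := by
        rw [← zpow_natCast q n, ← zpow_natCast q (n + triT n), ← zpow_add₀ hq0.ne',
          ← zpow_add₀ hq0.ne']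
        congr 1
        have h2 : 2*((triT n : ℕ) : ℤ) + (n:ℤ) = (n:ℤ)*(n:ℤ) := by exact_mod_cast triT_eq n
        push_cast
        linarith
      have hq3 : q^((triT n : ℤ) - n*n) = q^n / (q^n * q^(n + triT n)) := by
        rw [eq_div_iff (by positivity : (0:ℝ) < q^n * q^(n + triT n)).ne']
        exact hq2
      rw [hq3]
      have h1 : qPoch q q n ≠ 0 := qPoch_ne_zero hq0 hq1 hq0.le hq1 n
      have h3 : qPoch q (a*q) n ≠ 0 := qPoch_ne_zero hq0 hq1 haq0.le haq1' n
      field_simp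
      have hs : (-1:ℝ)^n * (-1:ℝ)^n = 1 := by
        rw [← pow_add, ← two_mul, pow_mul]
        norm_num
      linear_combination (q^n * eulS q (a*q) * a^n) * hs
    · intro k hk hkn
      rw [wallJ_eq_zero hq0 hq1 a (show k < n by
        have := Finset.mem_range.mp hk
        omega)]
      ring
  · rw [if_neg hnm]
    apply Finset.sum_eq_zero
    intro k hk
    rw [wallJ_eq_zero hq0 hq1 a (show k < n by
      have := Finset.mem_range.mp hk
      omega)]
    ring

include hq0 hq1 ha0 ha1 in
lemma core_sym (n m : ℕ) :
    HasSum (fun x : ℕ => (a*q)^x / qPoch q q x * wallP q n (x:ℝ) a * wallP q m (x:ℝ) a)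
      (if n = m then eulS q (a*q) * ((a*q)^n * qPoch q q n / qPoch q (a*q) n) else 0) := by
  rcases le_total m n with h | h
  · have := core_hasSum hq0 hq1 ha0 ha1 n m
    rwa [core_value hq0 hq1 ha0 ha1 h] at this
  · have := core_hasSum hq0 hq1 ha0 ha1 m n
    rw [core_value hq0 hq1 ha0 ha1 h] at this
    have hfun : (fun x : ℕ => (a*q)^x / qPoch q q x * wallP q m (x:ℝ) a * wallP q n (x:ℝ) a)
        = fun x : ℕ => (a*q)^x / qPoch q q x * wallP q n (x:ℝ) a * wallP q m (x:ℝ) a := by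
      funext x
      ring
    rw [hfun] at this
    by_cases hnm : n = m
    · subst hnm
      simpa using this
    · rw [if_neg hnm]
      rw [if_neg (fun hh => hnm hh.symm)] at this
      exact this

end Core

/-- Orthogonality relations for the normalized Wall functions. -/
theorem wallBar_orthogonality (q : ℝ) (hq0 : 0 < q) (hq1 : q < 1)
    (a : ℝ) (ha0 : 0 < a) (ha1 : a < q⁻¹) (n m : ℕ) :
    HasSum (fun x : ℕ => wallBar q n x a * wallBar q m x a)
      (if n = m then 1 else 0) := by
  have haq0 : 0 < a*q := by positivity
  have haq1' : a*q < 1 := haq1 hq0 ha1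
  have hEpos : 0 < qPochInf q (a*q) := qPochInf_pos hq0 hq1 haq0 haq1'
  have hDpos : ∀ r : ℕ, 0 < (a*q)^(-(r:ℤ)) * qPoch q (a*q) r / qPoch q q r := by
    intro r
    have h1 := qPoch_pos hq0 hq1 haq0.le haq1' r
    have h2 := qPoch_pos hq0 hq1 hq0.le hq1 r
    have h3 : (0:ℝ) < (a*q)^(-(r:ℤ)) := zpow_pos haq0 _
    positivity
  have key : ∀ x : ℕ, wallBar q n x a * wallBar q m x a
      = ((-1:ℝ)^(n+m) * qPochInf q (a*q)
          * Real.sqrt ((a*q)^(-(n:ℤ)) * qPoch q (a*q) n / qPoch q q n)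
          * Real.sqrt ((a*q)^(-(m:ℤ)) * qPoch q (a*q) m / qPoch q q m))
        * ((a*q)^x / qPoch q q x * wallP q n (x:ℝ) a * wallP q m (x:ℝ) a) := by
    intro x
    unfold wallBar
    have harg : ∀ r : ℕ,
        (a*q)^((x:ℤ)-(r:ℤ)) * qPochInf q (a*q) * qPoch q (a*q) r / (qPoch q q r * qPoch q q x)
          = ((a*q)^x / qPoch q q x * qPochInf q (a*q))
            * ((a*q)^(-(r:ℤ)) * qPoch q (a*q) r / qPoch q q r) := by
      intro r
      have hsp : (a*q)^((x:ℤ)-(r:ℤ)) = (a*q)^x * (a*q)^(-(r:ℤ)) := by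
        rw [sub_eq_add_neg, ← zpow_natCast (a*q) x, ← zpow_add₀ haq0.ne']
      rw [hsp]
      ring
    rw [harg n, harg m]
    have hWE : (0:ℝ) ≤ (a*q)^x / qPoch q q x * qPochInf q (a*q) := by
      have h2 := qPoch_pos hq0 hq1 hq0.le hq1 x
      positivity
    rw [Real.sqrt_mul hWE ((a*q)^(-(n:ℤ)) * qPoch q (a*q) n / qPoch q q n),
      Real.sqrt_mul hWE ((a*q)^(-(m:ℤ)) * qPoch q (a*q) m / qPoch q q m)]
    have hsq : Real.sqrt ((a*q)^x / qPoch q q x * qPochInf q (a*q))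
          * Real.sqrt ((a*q)^x / qPoch q q x * qPochInf q (a*q))
        = (a*q)^x / qPoch q q x * qPochInf q (a*q) := Real.mul_self_sqrt hWE
    have hsgn : (-1:ℝ)^(n+x) * (-1:ℝ)^(m+x) = (-1:ℝ)^(n+m) := by
      rw [← pow_add, show n+x+(m+x) = n+m+2*x by ring, pow_add, pow_mul]
      norm_num
    linear_combination (Real.sqrt ((a*q)^x / qPoch q q x * qPochInf q (a*q))
        * Real.sqrt ((a*q)^x / qPoch q q x * qPochInf q (a*q))
        * Real.sqrt ((a*q)^(-(n:ℤ)) * qPoch q (a*q) n / qPoch q q n)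
        * Real.sqrt ((a*q)^(-(m:ℤ)) * qPoch q (a*q) m / qPoch q q m)
        * wallP q n (x:ℝ) a * wallP q m (x:ℝ) a) * hsgn
      + ((-1:ℝ)^(n+m)
        * Real.sqrt ((a*q)^(-(n:ℤ)) * qPoch q (a*q) n / qPoch q q n)
        * Real.sqrt ((a*q)^(-(m:ℤ)) * qPoch q (a*q) m / qPoch q q m)
        * wallP q n (x:ℝ) a * wallP q m (x:ℝ) a) * hsq
  have H := (core_sym hq0 hq1 ha0 ha1 n m).mul_left
    ((-1:ℝ)^(n+m) * qPochInf q (a*q)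
      * Real.sqrt ((a*q)^(-(n:ℤ)) * qPoch q (a*q) n / qPoch q q n)
      * Real.sqrt ((a*q)^(-(m:ℤ)) * qPoch q (a*q) m / qPoch q q m))
  have hval : ((-1:ℝ)^(n+m) * qPochInf q (a*q)
      * Real.sqrt ((a*q)^(-(n:ℤ)) * qPoch q (a*q) n / qPoch q q n)
      * Real.sqrt ((a*q)^(-(m:ℤ)) * qPoch q (a*q) m / qPoch q q m))
      * (if n = m then eulS q (a*q) * ((a*q)^n * qPoch q q n / qPoch q (a*q) n) else 0)
      = (if n = m then (1:ℝ) else 0) := by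
    by_cases hnm : n = m
    · subst hnm
      rw [if_pos rfl, if_pos rfl]
      have hsg : (-1:ℝ)^(n+n) = 1 := by
        rw [← two_mul, pow_mul]
        norm_num
      have h1 : Real.sqrt ((a*q)^(-(n:ℤ)) * qPoch q (a*q) n / qPoch q q n)
          * Real.sqrt ((a*q)^(-(n:ℤ)) * qPoch q (a*q) n / qPoch q q n)
          = (a*q)^(-(n:ℤ)) * qPoch q (a*q) n / qPoch q q n := Real.mul_self_sqrt (hDpos n).le
      have hES := qPochInf_mul_eulS hq0 hq1 haq0 haq1'
      have hz : (a*q)^(-(n:ℤ)) = ((a*q)^n)⁻¹ := by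
        rw [← zpow_natCast (a*q) n, ← zpow_neg]
      have hPn := (qPoch_pos hq0 hq1 hq0.le hq1 n).ne'
      have hPa := (qPoch_pos hq0 hq1 haq0.le haq1' n).ne'
      have haqn : ((a*q)^n : ℝ) ≠ 0 := by positivity
      rw [hsg, one_mul]
      have h2 : qPochInf q (a*q)
            * Real.sqrt ((a*q)^(-(n:ℤ)) * qPoch q (a*q) n / qPoch q q n)
            * Real.sqrt ((a*q)^(-(n:ℤ)) * qPoch q (a*q) n / qPoch q q n)
            * (eulS q (a*q) * ((a*q)^n * qPoch q q n / qPoch q (a*q) n))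
          = (Real.sqrt ((a*q)^(-(n:ℤ)) * qPoch q (a*q) n / qPoch q q n)
              * Real.sqrt ((a*q)^(-(n:ℤ)) * qPoch q (a*q) n / qPoch q q n))
            * (qPochInf q (a*q) * eulS q (a*q))
            * ((a*q)^n * qPoch q q n / qPoch q (a*q) n) := by ring
      rw [h2, h1, hES, mul_one, hz]
      field_simp
    · rw [if_neg hnm, if_neg hnm, mul_zero]
  rw [funext key, ← hval]
  exact H
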